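/- Consider a scheduling game with rank-based utilities on two identical machines with n = 2ℓ unit jobs (ℓ ≥ 1) and arbitrary priority lists π₁, π₂. Let s be a profile that assigns exactly ℓ jobs to each machine and is stable against cost-reducing deviations, and let j_{1ℓ}, j_{2ℓ} be the last jobs on M₁ and M₂ respectively. Then s is a pure Nash equilibrium if and only if π₁(j_{1ℓ}) < π₁(j_{2ℓ}) and π₂(j_{2ℓ}) < π₂(j_{1ℓ}). -/
import Mathlib


open Finset
open scoped Classical

noncomputable section

variable {J M : Type*} [Fintype J]

/-- Completion time of job `j` in profile `s`: the total processing time of the jobs on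
`j`'s machine that do not come after `j` in that machine's priority list, divided by the speed. -/
def Ctime (p : J → ℝ) (r : M → ℝ) (π : M → J → ℕ) (s : J → M) (j : J) : ℝ :=
  (∑ j' ∈ univ.filter (fun j' => s j' = s j ∧ π (s j) j' ≤ π (s j) j), p j') / r (s j)

/-- Rank of job `j` in profile `s`. -/
def rankOf (p : J → ℝ) (r : M → ℝ) (π : M → J → ℕ) (s : J → M) (j : J) : ℝ :=
  ((univ.filter (fun j' => Ctime p r π s j' < Ctime p r π s j)).card : ℝ) +
    (((univ.filter (fun j' => Ctime p r π s j' = Ctime p r π s j)).card : ℝ) + 1) / 2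

/-- The unilateral deviation of job `j` to machine `i` is beneficial. -/
def Beneficial (p : J → ℝ) (r : M → ℝ) (π : M → J → ℕ) (s : J → M) (j : J) (i : M) : Prop :=
  rankOf p r π (Function.update s j i) j < rankOf p r π s j ∨
    (rankOf p r π (Function.update s j i) j = rankOf p r π s j ∧
      Ctime p r π (Function.update s j i) j < Ctime p r π s j)

/-- Pure Nash equilibrium: no job has a beneficial deviation. -/
def IsNE (p : J → ℝ) (r : M → ℝ) (π : M → J → ℕ) (s : J → M) : Prop :=
  ∀ j i, ¬ Beneficial p r π s j i

/-- `s` is stable against cost-reducing deviations. -/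
def StableCost (p : J → ℝ) (r : M → ℝ) (π : M → J → ℕ) (s : J → M) : Prop :=
  ∀ j i, ¬ Ctime p r π (Function.update s j i) j < Ctime p r π s j

/-- Job `j` is assigned to machine `i` and is processed last on it. -/
def IsLastOn (π : M → J → ℕ) (s : J → M) (i : M) (j : J) : Prop :=
  s j = i ∧ ∀ j', j' ≠ j → s j' = i → π i j' < π i j

set_option linter.unusedSectionVars false

variable [DecidableEq M] [DecidableEq J]

def cnt (π : M → J → ℕ) (s : J → M) (j : J) : ℕ :=
  (univ.filter (fun j' => s j' = s j ∧ π (s j) j' ≤ π (s j) j)).card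

lemma Ctime_eq_cnt (π : M → J → ℕ) (s : J → M) (j : J) :
    Ctime (fun _ => (1:ℝ)) (fun _ => (1:ℝ)) π s j = (cnt π s j : ℝ) := by
  simp only [Ctime, cnt, Finset.sum_const, nsmul_eq_mul, mul_one, div_one]
  congr

lemma rankOf_eq (π : M → J → ℕ) (s : J → M) (j : J) :
    rankOf (fun _ => (1:ℝ)) (fun _ => (1:ℝ)) π s j =
      ((univ.filter (fun j' => cnt π s j' < cnt π s j)).card : ℝ) +
      (((univ.filter (fun j' => cnt π s j' = cnt π s j)).card : ℝ) + 1) / 2 := by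
  simp only [rankOf, Ctime_eq_cnt, Nat.cast_lt, Nat.cast_inj]

lemma one_le_cnt (π : M → J → ℕ) (s : J → M) (j : J) : 1 ≤ cnt π s j := by
  refine Finset.card_pos.mpr ⟨j, ?_⟩
  simp [cnt]

lemma cnt_le_machine (π : M → J → ℕ) (s : J → M) (j : J) :
    cnt π s j ≤ (univ.filter (fun j' => s j' = s j)).card := by
  apply Finset.card_le_card
  intro x hx
  simp only [mem_filter] at *
  tauto

lemma cnt_lt_cnt (π : M → J → ℕ) (s : J → M) {j j' : J} (hs : s j' = s j)
    (hlt : π (s j) j' < π (s j) j) : cnt π s j' < cnt π s j := by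
  unfold cnt
  rw [hs]
  apply Finset.card_lt_card
  constructor
  · intro x hx
    simp only [mem_filter] at *
    exact ⟨hx.1, ⟨hx.2.1, le_trans hx.2.2 hlt.le⟩⟩
  · intro hsub
    have hj : j ∈ univ.filter (fun j'' => s j'' = s j ∧ π (s j) j'' ≤ π (s j) j) := by simp
    have := hsub hj
    simp only [mem_filter] at this
    exact absurd (lt_of_le_of_lt this.2.2 hlt) (lt_irrefl _)

lemma cnt_injOn (π : M → J → ℕ) (s : J → M) (i : M) (hπi : Function.Injective (π i)) :
    Set.InjOn (cnt π s) (univ.filter (fun j => s j = i) : Finset J) := by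
  intro a ha b hb hab
  simp only [coe_filter, Set.mem_setOf_eq, mem_univ, true_and] at ha hb
  by_contra hne
  have hpne : π i a ≠ π i b := fun h => hne (hπi h)
  rcases hpne.lt_or_gt with h | h
  · have := cnt_lt_cnt π s (j := b) (j' := a) (by rw [ha, hb]) (by rwa [hb])
    omega
  · have := cnt_lt_cnt π s (j := a) (j' := b) (by rw [ha, hb]) (by rwa [ha])
    omega

lemma cnt_image (π : M → J → ℕ) (s : J → M) (i : M) (hπi : Function.Injective (π i)) :
    (univ.filter (fun j => s j = i)).image (cnt π s) =
      Icc 1 (univ.filter (fun j => s j = i)).card := by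
  apply Finset.eq_of_subset_of_card_le
  · intro x hx
    simp only [mem_image] at hx
    obtain ⟨j, hj, rfl⟩ := hx
    simp only [mem_filter, mem_univ, true_and] at hj
    rw [mem_Icc]
    refine ⟨one_le_cnt π s j, ?_⟩
    have := cnt_le_machine π s j
    rwa [hj] at this
  · rw [Nat.card_Icc, Finset.card_image_of_injOn (cnt_injOn π s i hπi)]
    omega

lemma card_filter_lt_of_image (A : Finset J) (f : J → ℕ) (hinj : Set.InjOn f A)
    (him : A.image f = Icc 1 A.card) (t : ℕ) :
    (A.filter (fun j => f j < t)).card = min A.card (t - 1) := by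
  have h1 : ((A.filter (fun j => f j < t)).image f).card = (A.filter (fun j => f j < t)).card :=
    Finset.card_image_of_injOn (hinj.mono (by exact_mod_cast Finset.filter_subset _ A))
  have h2 : (A.filter (fun j => f j < t)).image f = (A.image f).filter (fun x => x < t) :=
    (Finset.filter_image (p := fun x => x < t)).symm
  have h3 : (Icc 1 A.card).filter (fun x => x < t) = Icc 1 (min A.card (t - 1)) := by
    ext x; simp only [mem_filter, mem_Icc]; omega
  rw [← h1, h2, him, h3, Nat.card_Icc]
  omega

lemma card_filter_eq_of_image (A : Finset J) (f : J → ℕ) (hinj : Set.InjOn f A)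
    (him : A.image f = Icc 1 A.card) (t : ℕ) :
    (A.filter (fun j => f j = t)).card = if 1 ≤ t ∧ t ≤ A.card then 1 else 0 := by
  have h1 : ((A.filter (fun j => f j = t)).image f).card = (A.filter (fun j => f j = t)).card :=
    Finset.card_image_of_injOn (hinj.mono (by exact_mod_cast Finset.filter_subset _ A))
  have h2 : (A.filter (fun j => f j = t)).image f = (A.image f).filter (fun x => x = t) :=
    (Finset.filter_image (p := fun x => x = t)).symm
  have h3 : (Icc 1 A.card).filter (fun x => x = t) =
      if 1 ≤ t ∧ t ≤ A.card then {t} else ∅ := by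
    split_ifs with h
    · ext x; simp only [mem_filter, mem_Icc, mem_singleton]; omega
    · ext x; simp only [mem_filter, mem_Icc, notMem_empty, iff_false]; omega
  rw [← h1, h2, him, h3]
  split_ifs <;> simp

set_option linter.unusedSectionVars false

lemma card_split (u : J → Fin 2) (P : J → Prop) [DecidablePred P] :
    (univ.filter P).card =
      ((univ.filter (fun j => u j = 0)).filter P).card +
      ((univ.filter (fun j => u j = 1)).filter P).card := by
  have h2 : ∀ x : Fin 2, ¬ x = 0 ↔ x = 1 := by decide
  have hcong : (univ.filter P).filter (fun j => ¬ u j = 0) =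
      (univ.filter P).filter (fun j => u j = 1) :=
    Finset.filter_congr (fun x _ => by simp [h2])
  rw [Finset.filter_comm, Finset.filter_comm (s := univ) (p := fun j => u j = 1) (q := P),
    ← hcong,
    Finset.card_filter_add_card_filter_not (s := univ.filter P) (p := fun j => u j = 0)]

lemma cnt_count_lt (π : Fin 2 → J → ℕ) (hπ : ∀ i, Function.Injective (π i))
    (u : J → Fin 2) (t : ℕ) :
    (univ.filter (fun j => cnt π u j < t)).card =
      min (univ.filter (fun j => u j = 0)).card (t - 1) +
      min (univ.filter (fun j => u j = 1)).card (t - 1) := by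
  rw [card_split u]
  rw [card_filter_lt_of_image _ _ (cnt_injOn π u 0 (hπ 0)) (cnt_image π u 0 (hπ 0)) t,
      card_filter_lt_of_image _ _ (cnt_injOn π u 1 (hπ 1)) (cnt_image π u 1 (hπ 1)) t]

lemma cnt_count_eq (π : Fin 2 → J → ℕ) (hπ : ∀ i, Function.Injective (π i))
    (u : J → Fin 2) (t : ℕ) :
    (univ.filter (fun j => cnt π u j = t)).card =
      (if 1 ≤ t ∧ t ≤ (univ.filter (fun j => u j = 0)).card then 1 else 0) +
      (if 1 ≤ t ∧ t ≤ (univ.filter (fun j => u j = 1)).card then 1 else 0) := by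
  rw [card_split u]
  rw [card_filter_eq_of_image _ _ (cnt_injOn π u 0 (hπ 0)) (cnt_image π u 0 (hπ 0)) t,
      card_filter_eq_of_image _ _ (cnt_injOn π u 1 (hπ 1)) (cnt_image π u 1 (hπ 1)) t]

lemma filter_update_target (s : J → M) (j : J) (i : M) (h : s j ≠ i) :
    (univ.filter (fun j'' => Function.update s j i j'' = i)) =
      insert j (univ.filter (fun j'' => s j'' = i)) := by
  ext x
  simp only [mem_filter, mem_insert, mem_univ, true_and]
  rcases eq_or_ne x j with rfl | hx
  · simp
  · simp [Function.update_of_ne hx, hx]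

lemma card_update_target (s : J → M) (j : J) (i : M) (h : s j ≠ i) :
    (univ.filter (fun j'' => Function.update s j i j'' = i)).card =
      (univ.filter (fun j'' => s j'' = i)).card + 1 := by
  rw [filter_update_target s j i h, Finset.card_insert_of_notMem (by simp [h])]

lemma card_update_source (s : J → M) (j : J) (i : M) (h : s j ≠ i) :
    (univ.filter (fun j'' => Function.update s j i j'' = s j)).card =
      (univ.filter (fun j'' => s j'' = s j)).card - 1 := by
  have : (univ.filter (fun j'' => Function.update s j i j'' = s j)) =
      (univ.filter (fun j'' => s j'' = s j)).erase j := by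
    ext x
    simp only [mem_filter, mem_erase, mem_univ, true_and]
    rcases eq_or_ne x j with rfl | hx
    · simp [Ne.symm h]
    · simp [Function.update_of_ne hx, hx]
  rw [this, Finset.card_erase_of_mem (by simp)]

lemma cnt_eq_machine_card (π : M → J → ℕ) (u : J → M) (j : J)
    (h : ∀ j'', u j'' = u j → π (u j) j'' ≤ π (u j) j) :
    cnt π u j = (univ.filter (fun j'' => u j'' = u j)).card := by
  unfold cnt
  congr 1
  ext x
  simp only [mem_filter, mem_univ, true_and]
  exact ⟨fun hx => hx.1, fun hx => ⟨hx, h x hx⟩⟩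

lemma cnt_last (π : M → J → ℕ) (u : J → M) (i : M) (j : J) (h : IsLastOn π u i j) :
    cnt π u j = (univ.filter (fun j'' => u j'' = i)).card := by
  obtain ⟨hji, hlast⟩ := h
  rw [← hji]
  apply cnt_eq_machine_card
  intro j'' hj''
  rcases eq_or_ne j'' j with rfl | hne
  · exact le_refl _
  · rw [hji] at hj'' ⊢
    exact (hlast j'' hne hj'').le

lemma eq_last (π : M → J → ℕ) (u : J → M) (i : M) (jl j : J) (h : IsLastOn π u i jl)
    (hji : u j = i) (hcnt : cnt π u j = (univ.filter (fun j'' => u j'' = i)).card) :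
    j = jl := by
  by_contra hne
  have hlt : π i j < π i jl := h.2 j hne hji
  have hsub : univ.filter (fun j' => u j' = u j ∧ π (u j) j' ≤ π (u j) j) ⊆
      univ.filter (fun j'' => u j'' = i) := by
    intro x hx
    simp only [mem_filter, mem_univ, true_and] at *
    rw [← hji]; exact hx.1
  have heq : univ.filter (fun j' => u j' = u j ∧ π (u j) j' ≤ π (u j) j) =
      univ.filter (fun j'' => u j'' = i) := by
    apply Finset.eq_of_subset_of_card_le hsub
    rw [← hcnt]; rfl
  have hjl : jl ∈ univ.filter (fun j' => u j' = u j ∧ π (u j) j' ≤ π (u j) j) := by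
    rw [heq]; simp [h.1]
  simp only [mem_filter, mem_univ, true_and, hji] at hjl
  exact absurd (lt_of_le_of_lt hjl.2 hlt) (lt_irrefl _)


lemma update_classical_eq {α β : Type*} [DecidableEq α] (f : α → β) (a : α) (b : β) :
    (@Function.update α (fun _ => β) (fun a b => Classical.propDecidable (a = b)) f a b) =
      Function.update f a b := by
  funext x
  unfold Function.update
  by_cases h : x = a <;> simp [h]

lemma fin2_cases : ∀ (i i' : Fin 2), i ≠ i' → (i = 0 ∧ i' = 1) ∨ (i = 1 ∧ i' = 0) := by decide

lemma fin2_or : ∀ x : Fin 2, x = 0 ∨ x = 1 := by decide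

lemma stab_cnt {n : ℕ} (π : Fin 2 → Fin n → ℕ) (s : Fin n → Fin 2)
    (hstable : StableCost (fun _ => (1:ℝ)) (fun _ => (1:ℝ)) π s) (j : Fin n) (i : Fin 2) :
    cnt π s j ≤ cnt π (Function.update s j i) j := by
  have h := hstable j i
  rw [Ctime_eq_cnt, Ctime_eq_cnt, update_classical_eq] at h
  exact_mod_cast not_lt.mp h

/-- If the last job `jb` of machine `i'` has lower priority on machine `i` than the last job
`ja` of machine `i`, then `jb` benefits from deviating to `i`. -/
lemma benef_last (ℓ : ℕ) (hℓ : 1 ≤ ℓ) {n : ℕ}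
    (π : Fin 2 → Fin n → ℕ) (hπ : ∀ i, Function.Injective (π i))
    (s : Fin n → Fin 2)
    (hbal : ∀ i, (univ.filter (fun j => s j = i)).card = ℓ)
    (hstable : StableCost (fun _ => (1:ℝ)) (fun _ => (1:ℝ)) π s)
    (i i' : Fin 2) (hii' : i ≠ i') (ja jb : Fin n)
    (ha : IsLastOn π s i ja) (hb : IsLastOn π s i' jb)
    (hπab : π i jb < π i ja) :
    Beneficial (fun _ => (1:ℝ)) (fun _ => (1:ℝ)) π s jb i := by
  unfold Beneficial
  rw [update_classical_eq]
  have hsjb : s jb = i' := hb.1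
  have hne : s jb ≠ i := by rw [hsjb]; exact Ne.symm hii'
  have hs'jb : Function.update s jb i jb = i := Function.update_self jb i s
  -- old completion time is ℓ
  have ht : cnt π s jb = ℓ := by rw [cnt_last π s i' jb hb, hbal i']
  -- new completion time is at most ℓ (the last job `ja` of machine `i` comes after `jb`)
  have hub : cnt π (Function.update s jb i) jb ≤ ℓ := by
    have hsub : (univ.filter fun x => Function.update s jb i x = Function.update s jb i jb ∧
        π (Function.update s jb i jb) x ≤ π (Function.update s jb i jb) jb) ⊆
        insert jb ((univ.filter fun x => s x = i).erase ja) := by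
      intro x hx
      simp only [mem_filter, mem_univ, true_and, hs'jb] at hx
      rcases eq_or_ne x jb with rfl | hxjb
      · exact mem_insert_self _ _
      · have hsx : s x = i := by
          rw [← Function.update_of_ne hxjb i s]; exact hx.1
        refine mem_insert_of_mem (mem_erase.mpr ⟨?_, by simp [hsx]⟩)
        intro hxa
        rw [hxa] at hx
        exact absurd (lt_of_le_of_lt hx.2 hπab) (lt_irrefl _)
    calc cnt π (Function.update s jb i) jb
        ≤ (insert jb ((univ.filter fun x => s x = i).erase ja)).card :=
          Finset.card_le_card hsub
      _ ≤ ((univ.filter fun x => s x = i).erase ja).card + 1 := Finset.card_insert_le _ _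
      _ = ℓ := by
          rw [Finset.card_erase_of_mem (by simp [ha.1]), hbal i]
          omega
  have ht' : cnt π (Function.update s jb i) jb = ℓ := by
    have := stab_cnt π s hstable jb i
    omega
  -- machine cards after the deviation
  have hct : (univ.filter fun j'' => Function.update s jb i j'' = i).card = ℓ + 1 := by
    rw [card_update_target s jb i hne, hbal i]
  have hcs0 : (univ.filter fun j'' => Function.update s jb i j'' = s jb).card =
      (univ.filter fun j'' => s j'' = s jb).card - 1 := card_update_source s jb i hne
  rw [hsjb] at hcs0
  rw [hbal i'] at hcs0
  have hcs : ((univ.filter fun j'' => Function.update s jb i j'' = 0).card = ℓ + 1 ∧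
        (univ.filter fun j'' => Function.update s jb i j'' = 1).card = ℓ - 1) ∨
      ((univ.filter fun j'' => Function.update s jb i j'' = 0).card = ℓ - 1 ∧
        (univ.filter fun j'' => Function.update s jb i j'' = 1).card = ℓ + 1) := by
    rcases fin2_cases i i' hii' with ⟨hi, hi'⟩ | ⟨hi, hi'⟩
    · subst hi; subst hi'; left; exact ⟨hct, hcs0⟩
    · subst hi; subst hi'; right; exact ⟨hcs0, hct⟩
  -- counts
  have c1 : (univ.filter (fun j' => cnt π s j' < cnt π s jb)).card = 2*(ℓ-1) := by
    rw [ht, cnt_count_lt π hπ s ℓ, hbal 0, hbal 1]; omega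
  have c2 : (univ.filter (fun j' => cnt π s j' = cnt π s jb)).card = 2 := by
    rw [ht, cnt_count_eq π hπ s ℓ, hbal 0, hbal 1]; split_ifs <;> omega
  have c1' : (univ.filter (fun j' => cnt π (Function.update s jb i) j' <
      cnt π (Function.update s jb i) jb)).card = 2*(ℓ-1) := by
    rw [ht', cnt_count_lt π hπ (Function.update s jb i) ℓ]; omega
  have c2' : (univ.filter (fun j' => cnt π (Function.update s jb i) j' =
      cnt π (Function.update s jb i) jb)).card = 1 := by
    rw [ht', cnt_count_eq π hπ (Function.update s jb i) ℓ]; split_ifs <;> omega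
  left
  rw [rankOf_eq, rankOf_eq, c1, c2, c1', c2']
  norm_num

/-- A balanced cost-stable profile of `2ℓ` unit jobs on two identical machines is a NE
iff each of the two last jobs is prioritized on its own machine over the other one. -/
theorem balanced_NE_iff (ℓ : ℕ) (hℓ : 1 ≤ ℓ) (n : ℕ) (hn : n = 2 * ℓ)
    (π : Fin 2 → Fin n → ℕ) (hπ : ∀ i, Function.Injective (π i))
    (s : Fin n → Fin 2)
    (hbal : ∀ i, (univ.filter (fun j => s j = i)).card = ℓ)
    (hstable : StableCost (fun _ => (1:ℝ)) (fun _ => (1:ℝ)) π s)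
    (j1 j2 : Fin n) (h1 : IsLastOn π s 0 j1) (h2 : IsLastOn π s 1 j2) :
    IsNE (fun _ => (1:ℝ)) (fun _ => (1:ℝ)) π s ↔
      (π 0 j1 < π 0 j2 ∧ π 1 j2 < π 1 j1) := by
  have hne12 : j1 ≠ j2 := by
    intro h
    have h10 := h1.1
    have h21 := h2.1
    rw [h] at h10
    rw [h10] at h21
    exact absurd h21 (by decide)
  constructor
  · intro hNE
    constructor
    · by_contra hcon
      have hlt : π 0 j2 < π 0 j1 := by
        rcases lt_trichotomy (π 0 j2) (π 0 j1) with h | h | h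
        · exact h
        · exact absurd (hπ 0 h) (Ne.symm hne12)
        · exact absurd h hcon
      exact hNE j2 0 (benef_last ℓ hℓ π hπ s hbal hstable 0 1 (by decide) j1 j2 h1 h2 hlt)
    · by_contra hcon
      have hlt : π 1 j1 < π 1 j2 := by
        rcases lt_trichotomy (π 1 j1) (π 1 j2) with h | h | h
        · exact h
        · exact absurd (hπ 1 h) hne12
        · exact absurd h hcon
      exact hNE j1 1 (benef_last ℓ hℓ π hπ s hbal hstable 1 0 (by decide) j2 j1 h2 h1 hlt)
  · rintro ⟨hp1, hp2⟩ j i hB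
    by_cases hij : i = s j
    · rw [hij] at hB
      unfold Beneficial at hB
      rw [update_classical_eq, Function.update_eq_self] at hB
      rcases hB with h | ⟨_, h⟩ <;> exact absurd h (lt_irrefl _)
    · have hne : s j ≠ i := Ne.symm hij
      unfold Beneficial at hB
      rw [update_classical_eq] at hB
      have hstab : cnt π s j ≤ cnt π (Function.update s j i) j := stab_cnt π s hstable j i
      have ht1 : 1 ≤ cnt π s j := one_le_cnt π s j
      have htl : cnt π s j ≤ ℓ := by
        have h := cnt_le_machine π s j
        rw [hbal (s j)] at h
        exact h
      have hct : (univ.filter fun j'' => Function.update s j i j'' = i).card = ℓ + 1 := by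
        rw [card_update_target s j i hne, hbal i]
      have hcs0 : (univ.filter fun j'' => Function.update s j i j'' = s j).card = ℓ - 1 := by
        rw [card_update_source s j i hne, hbal (s j)]
      have hcs : ((univ.filter fun j'' => Function.update s j i j'' = 0).card = ℓ + 1 ∧
            (univ.filter fun j'' => Function.update s j i j'' = 1).card = ℓ - 1) ∨
          ((univ.filter fun j'' => Function.update s j i j'' = 0).card = ℓ - 1 ∧
            (univ.filter fun j'' => Function.update s j i j'' = 1).card = ℓ + 1) := by
        rcases fin2_cases i (s j) hij with ⟨hi, hsj⟩ | ⟨hi, hsj⟩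
        · subst hi; rw [hsj] at hcs0; left; exact ⟨hct, hcs0⟩
        · subst hi; rw [hsj] at hcs0; right; exact ⟨hcs0, hct⟩
      have ht'ub : cnt π (Function.update s j i) j ≤ ℓ + 1 := by
        have h := cnt_le_machine π (Function.update s j i) j
        have hs'j : Function.update s j i j = i := Function.update_self j i s
        rw [hs'j, hct] at h
        exact h
      rcases hB with hlt | ⟨_, hctlt⟩
      swap
      · rw [Ctime_eq_cnt, Ctime_eq_cnt] at hctlt
        exact absurd hctlt (by exact_mod_cast not_lt.mpr hstab)
      -- exclude t = ℓ ∧ t' = ℓ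
      have hex : ¬ (cnt π s j = ℓ ∧ cnt π (Function.update s j i) j = ℓ) := by
        rintro ⟨hteq, ht'eq⟩
        rcases fin2_or (s j) with hsj | hsj
        · have hj1 : j = j1 := by
            apply eq_last π s 0 j1 j h1 hsj
            rw [hbal 0]
            exact hteq
          have hi1 : i = 1 := by
            rcases fin2_or i with h0 | h0
            · exact absurd (h0.trans hsj.symm) hij
            · exact h0
          subst hj1
          have hall : ∀ x, Function.update s j i x = Function.update s j i j →
              π (Function.update s j i j) x ≤ π (Function.update s j i j) j := by
            intro x hx
            have hs'j : Function.update s j i j = i := Function.update_self j i s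
            rw [hs'j] at hx ⊢
            rcases eq_or_ne x j with rfl | hxj
            · exact le_refl _
            · have hsx : s x = i := by
                rw [← Function.update_of_ne hxj i s]; exact hx
              rw [hi1] at hsx ⊢
              rcases eq_or_ne x j2 with rfl | hxj2
              · exact hp2.le
              · exact (lt_trans (h2.2 x hxj2 hsx) hp2).le
          have hℓ1 : cnt π (Function.update s j i) j = ℓ + 1 := by
            rw [cnt_eq_machine_card π (Function.update s j i) j hall]
            have hs'j : Function.update s j i j = i := Function.update_self j i s
            rw [hs'j]
            exact hct
          omega
        · have hj2 : j = j2 := by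
            apply eq_last π s 1 j2 j h2 hsj
            rw [hbal 1]
            exact hteq
          have hi0 : i = 0 := by
            rcases fin2_or i with h0 | h0
            · exact h0
            · exact absurd (h0.trans hsj.symm) hij
          subst hj2
          have hall : ∀ x, Function.update s j i x = Function.update s j i j →
              π (Function.update s j i j) x ≤ π (Function.update s j i j) j := by
            intro x hx
            have hs'j : Function.update s j i j = i := Function.update_self j i s
            rw [hs'j] at hx ⊢
            rcases eq_or_ne x j with rfl | hxj
            · exact le_refl _
            · have hsx : s x = i := by
                rw [← Function.update_of_ne hxj i s]; exact hx
              rw [hi0] at hsx ⊢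
              rcases eq_or_ne x j1 with rfl | hxj1
              · exact hp1.le
              · exact (lt_trans (h1.2 x hxj1 hsx) hp1).le
          have hℓ1 : cnt π (Function.update s j i) j = ℓ + 1 := by
            rw [cnt_eq_machine_card π (Function.update s j i) j hall]
            have hs'j : Function.update s j i j = i := Function.update_self j i s
            rw [hs'j]
            exact hct
          omega
      -- counts and final arithmetic
      have key : 2*(2*(cnt π s j - 1)) + 2 ≤
          2 * (univ.filter (fun j' => cnt π (Function.update s j i) j' <
                cnt π (Function.update s j i) j)).card +
          (univ.filter (fun j' => cnt π (Function.update s j i) j' =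
                cnt π (Function.update s j i) j)).card := by
        rw [cnt_count_lt π hπ (Function.update s j i) _,
          cnt_count_eq π hπ (Function.update s j i) _]
        split_ifs <;> omega
      have c1 : (univ.filter (fun j' => cnt π s j' < cnt π s j)).card = 2*(cnt π s j - 1) := by
        rw [cnt_count_lt π hπ s _, hbal 0, hbal 1]; omega
      have c2 : (univ.filter (fun j' => cnt π s j' = cnt π s j)).card = 2 := by
        rw [cnt_count_eq π hπ s _, hbal 0, hbal 1]; split_ifs <;> omega
      rw [rankOf_eq, rankOf_eq, c1, c2] at hlt
      have key' := (Nat.cast_le (α := ℝ)).mpr key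
      push_cast at key' hlt
      linarith
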